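/- For every natural number n, the number of area sequences of size n equals the Catalan number C_n = (1/(n+1))·binomial(2n, n). -/

import Mathlib

/-- The `i`-th letter of the word `w` (`1`-indexed, as in the paper);
defaults to `0` out of range. -/
def get1 (w : List ℕ) (i : ℕ) : ℕ := w.getD (i - 1) 0

/-- `w` is the area sequence of a Dyck path: the first letter is `0` and each
letter exceeds the previous one by at most one. -/
def IsAreaSeq (w : List ℕ) : Prop :=
  (w ≠ [] → get1 w 1 = 0) ∧ ∀ i, 1 ≤ i → i < w.length → get1 w (i + 1) ≤ get1 w i + 1

/-- Insertion at position `i` (for `0 ≤ i ≤ n`): `ins w 0` prepends a `0`, and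
for `1 ≤ i ≤ n`, `ins w i` inserts the letter `w_i + 1` just after position `i`. -/
def ins (w : List ℕ) (i : ℕ) : List ℕ :=
  w.take i ++ (if i = 0 then 0 else get1 w i + 1) :: w.drop i

/-- The area statistic: the sum of the letters. -/
def area (w : List ℕ) : ℕ := w.sum

/-- The dinv statistic: `dinv w = Σ_i d_i` where `d_i` is the number of `j > i`
with `w_j = w_i` or `w_j = w_i - 1`. -/
def dinv (w : List ℕ) : ℕ :=
  ∑ i ∈ Finset.Icc 1 w.length,
    ((Finset.Ioc i w.length).filter
      (fun j => get1 w j = get1 w i ∨ get1 w j + 1 = get1 w i)).card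

/-- The maximal value of a word (`0` for the empty word). -/
def maxVal (w : List ℕ) : ℕ := w.foldr max 0

/-- Positions of the letters of maximal value `m`. -/
def Maxb (w : List ℕ) : Finset ℕ :=
  (Finset.Icc 1 w.length).filter (fun i => get1 w i = maxVal w)

/-- Positions `i` with `w_i = m - 1` such that all letters after position `i`
are `< m`. -/
def Maxa (w : List ℕ) : Finset ℕ :=
  (Finset.Icc 1 w.length).filter (fun i =>
    get1 w i + 1 = maxVal w ∧ ∀ j ∈ Finset.Ioc i w.length, get1 w j < maxVal w)

/-- The position of the leftmost letter equal to the maximal value `m` in the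
rightmost block of consecutive letters equal to `m`. -/
def i0 (w : List ℕ) : ℕ :=
  ((Finset.Icc 1 w.length).filter (fun i =>
    get1 w i = maxVal w ∧ (i = 1 ∨ get1 w (i - 1) ≠ maxVal w))).sup id

/-- The admissible insertion positions of `w`, listed in admissible order:
the elements of `Maxb w` in decreasing order, then the elements of `Maxa w`
in decreasing order, then `i0 w - 1`.  The empty word has the single
admissible insertion position `0`. -/
def admissible (w : List ℕ) : List ℕ :=
  if w = [] then [0]
  else ((Maxb w).sort (· ≤ ·)).reverse ++ ((Maxa w).sort (· ≤ ·)).reverse ++ [i0 w - 1]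

/-- Auxiliary version of the map `ψ`, reading the reversed word. -/
def psiRev : List ℕ → List ℕ
  | [] => []
  | a :: u => ins (psiRev u) ((admissible (psiRev u)).getD a 0)

/-- The map `ψ`: `ψ(ε) = ε` and `ψ(u a) = ins_{c_a}(ψ(u))` where
`c_0, c_1, …, c_k` are the admissible insertion positions of `ψ(u)` in
admissible order. -/
def psi (w : List ℕ) : List ℕ := psiRev w.reverse

/-- The bounce sequence: `b_1 = 0`, and `b_i = b_{i-1} + 1` if
`b_{i-1} + 1 ≤ w_i`, otherwise `b_i = 0`. -/
def bseq (w : List ℕ) : ℕ → ℕ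
  | 0 => 0
  | 1 => 0
  | (i + 2) => if bseq w (i + 1) + 1 ≤ get1 w (i + 2) then bseq w (i + 1) + 1 else 0

/-- The bounces of `w`: positions `1 < i ≤ n` with `b_i = 0`. -/
def bounces (w : List ℕ) : Finset ℕ :=
  (Finset.Icc 2 w.length).filter (fun i => bseq w i = 0)

/-- The bounce statistic: the sum of the reversed positions `n - i + 1` of the
bounces of `w`. -/
def bounce (w : List ℕ) : ℕ := ∑ i ∈ bounces w, (w.length - i + 1)

lemma isAreaSeq_iff (w : List ℕ) :
    IsAreaSeq w ↔ w.headI = 0 ∧ w.Chain' (fun a b => b ≤ a + 1) := by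
  constructor
  · rintro ⟨h0, h1⟩
    constructor
    · cases w with
      | nil => rfl
      | cons a t =>
        have := h0 (by simp)
        simpa [get1] using this
    · unfold List.Chain'
      rw [List.isChain_iff_getElem]
      intro i hi
      have := h1 (i + 1) (by omega) (by omega)
      simp only [get1, Nat.add_sub_cancel] at this
      rw [List.getD_eq_getElem _ _ (by omega), List.getD_eq_getElem _ _ (by omega)] at this
      simpa using this
  · rintro ⟨h0, h1⟩
    constructor
    · intro hne
      cases w with
      | nil => simp at hne
      | cons a t => simpa [get1] using h0
    · intro i hi hlen
      unfold List.Chain' at h1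
      rw [List.isChain_iff_getElem] at h1
      have := h1 (i - 1) (by omega)
      simp only [get1, Nat.add_sub_cancel]
      rw [List.getD_eq_getElem _ _ (by omega), List.getD_eq_getElem _ _ (by omega)]
      have hieq : i - 1 + 1 = i := by omega
      simpa [hieq] using this

/-- Area sequences as a subtype. -/
abbrev AS (n : ℕ) := {w : List ℕ // IsAreaSeq w ∧ w.length = n}

lemma good_join (u v : List ℕ) (hu : IsAreaSeq u) (hv : IsAreaSeq v) :
    IsAreaSeq (0 :: (u.map (· + 1) ++ v)) := by
  rw [isAreaSeq_iff] at *
  obtain ⟨hu0, hu1⟩ := hu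
  obtain ⟨hv0, hv1⟩ := hv
  refine ⟨rfl, ?_⟩
  unfold List.Chain'
  rw [List.isChain_cons]
  constructor
  · intro y hy
    rcases u with _ | ⟨a, t⟩
    · rcases v with _ | ⟨b, s⟩
      · simp at hy
      · simp at hy hv0; omega
    · simp at hy hu0; omega
  · rw [List.isChain_append]
    refine ⟨?_, hv1, ?_⟩
    · rw [List.isChain_map]
      exact hu1.imp (fun a b h => by omega)
    · intro x hx y hy
      rcases v with _ | ⟨b, s⟩
      · simp at hy
      · simp at hy hv0; omega

lemma takeWhile_ne_append (l₁ l₂ : List ℕ) (h : ∀ x ∈ l₁, x ≠ 0)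
    (h2 : l₂.takeWhile (fun x => decide (x ≠ 0)) = []) :
    (l₁ ++ l₂).takeWhile (fun x => decide (x ≠ 0)) = l₁ := by
  induction l₁ with
  | nil => simpa using h2
  | cons a t ih =>
    have ha : a ≠ 0 := h a (by simp)
    rw [List.cons_append, List.takeWhile_cons, if_pos (by simp [ha]),
      ih (fun x hx => h x (by simp [hx]))]

lemma takeWhile_good (v : List ℕ) (hv : v.headI = 0) :
    v.takeWhile (fun x => decide (x ≠ 0)) = [] := by
  cases v with
  | nil => rfl
  | cons b s => simp at hv; simp [List.takeWhile_cons, hv]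

/-- The join map realizing the Catalan recurrence. -/
def joinF (n : ℕ) (x : Σ i : Fin (n + 1), AS i × AS (n - i)) : AS (n + 1) :=
  ⟨0 :: ((x.2.1 : List ℕ).map (· + 1) ++ (x.2.2 : List ℕ)),
    good_join _ _ x.2.1.2.1 x.2.2.2.1, by
      have h1 := x.2.1.2.2
      have h2 := x.2.2.2.2
      have h3 : (x.1 : ℕ) ≤ n := by omega
      simp [h1, h2]; omega⟩

lemma joinF_inj (n : ℕ) : Function.Injective (joinF n) := by
  rintro ⟨⟨i, hi⟩, ⟨u, hu, hul⟩, ⟨v, hv, hvl⟩⟩ ⟨⟨j, hj⟩, ⟨u', hu', hul'⟩, ⟨v', hv', hvl'⟩⟩ heq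
  simp only [joinF, Subtype.mk.injEq, List.cons.injEq, true_and] at heq
  have hmap : u.map (· + 1) = u'.map (· + 1) := by
    have t1 := takeWhile_ne_append (u.map (· + 1)) v
      (by simp) (takeWhile_good v ((isAreaSeq_iff v).1 hv).1)
    have t2 := takeWhile_ne_append (u'.map (· + 1)) v'
      (by simp) (takeWhile_good v' ((isAreaSeq_iff v').1 hv').1)
    rw [← t1, ← t2, heq]
  have huu : u = u' := by
    exact List.map_injective_iff.2 (add_left_injective 1) hmap
  subst huu
  have hij : i = j := by rw [Fin.val_mk] at hul hul'; omega
  subst hij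
  have hvv : v = v' := by
    have := List.append_cancel_left heq
    exact this
  subst hvv
  rfl

lemma headI_dropWhile_ne (t : List ℕ) :
    (t.dropWhile (fun x => decide (x ≠ 0))).headI = 0 := by
  induction t with
  | nil => rfl
  | cons a s ih =>
    by_cases h : a = 0
    · simp [List.dropWhile_cons, h]
    · simpa [List.dropWhile_cons, h] using ih

lemma joinF_surj (n : ℕ) : Function.Surjective (joinF n) := by
  rintro ⟨w, hw, hwl⟩
  obtain ⟨h0, hch⟩ := (isAreaSeq_iff w).1 hw
  cases w with
  | nil => simp at hwl
  | cons a t =>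
    simp only [List.headI] at h0
    subst h0
    have hpv : t.takeWhile (fun x => decide (x ≠ 0)) ++ t.dropWhile (fun x => decide (x ≠ 0)) = t :=
      List.takeWhile_append_dropWhile
    have htlen : t.length = n := by simpa using hwl
    set p := t.takeWhile (fun x => decide (x ≠ 0)) with hp
    set v := t.dropWhile (fun x => decide (x ≠ 0)) with hv
    have htch : t.Chain' (fun a b => b ≤ a + 1) := (List.isChain_cons.1 hch).2
    have hhead : ∀ y ∈ t.head?, y ≤ 0 + 1 := (List.isChain_cons.1 hch).1
    have hpch : p.Chain' (fun a b => b ≤ a + 1) := htch.prefix (List.takeWhile_prefix _)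
    have hvch : v.Chain' (fun a b => b ≤ a + 1) := htch.suffix (List.dropWhile_suffix _)
    have hppos : ∀ x ∈ p, x ≠ 0 := fun x hx => by
      simpa using List.mem_takeWhile_imp hx
    have hum : (p.map (· - 1)).map (· + 1) = p := by
      rw [List.map_map]
      have : ∀ x ∈ p, x - 1 + 1 = x := fun x hx => by
        have := hppos x hx; omega
      calc p.map ((· + 1) ∘ (· - 1)) = p.map id := List.map_congr_left this
        _ = p := List.map_id p
    have hvgood : IsAreaSeq v := by
      rw [isAreaSeq_iff]
      exact ⟨headI_dropWhile_ne t, hvch⟩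
    have hugood : IsAreaSeq (p.map (· - 1)) := by
      rw [isAreaSeq_iff]
      constructor
      · rcases hp' : p with _ | ⟨c, q⟩
        · rfl
        · have hc1 : c ≤ 1 := by
            have : t.head? = some c := by
              rw [← hpv, hp']; rfl
            exact hhead c (by rw [this]; simp)
          have hc0 : c ≠ 0 := hppos c (by rw [hp']; simp)
          simp only [List.map_cons, List.headI]
          omega
      · unfold List.Chain'
        rw [List.isChain_map]
        exact hpch.imp (fun a b h => by omega)
    have hlen : p.length + v.length = n := by
      rw [← htlen, ← hpv]; simp
    refine ⟨⟨⟨p.length, by omega⟩, ⟨⟨p.map (· - 1), hugood, by simp⟩, ⟨v, hvgood, by simp; omega⟩⟩⟩, ?_⟩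
    apply Subtype.ext
    show 0 :: ((p.map (· - 1)).map (· + 1) ++ v) = 0 :: t
    rw [hum, hpv]

lemma joinF_bij (n : ℕ) : Function.Bijective (joinF n) :=
  ⟨joinF_inj n, joinF_surj n⟩

lemma as_zero_unique : ∀ x : AS 0, x = ⟨[], ⟨fun h => absurd rfl h, fun i h1 h2 => by simp at h2⟩, rfl⟩ := by
  rintro ⟨w, hw, hwl⟩
  apply Subtype.ext
  exact List.length_eq_zero_iff.1 hwl

instance as_finite : ∀ n, Finite (AS n) := by
  intro n
  induction n using Nat.strong_induction_on with
  | _ n ih =>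
    cases n with
    | zero =>
      have : Subsingleton (AS 0) := ⟨fun a b => (as_zero_unique a).trans (as_zero_unique b).symm⟩
      exact Finite.of_subsingleton
    | succ m =>
      haveI : ∀ i : Fin (m + 1), Finite (AS i × AS (m - i)) := fun i => by
        haveI := ih i (by omega)
        haveI := ih (m - i) (by omega)
        infer_instance
      exact Finite.of_surjective _ (joinF_surj m)

lemma card_AS : ∀ n, Nat.card (AS n) = catalan n := by
  intro n
  induction n using Nat.strong_induction_on with
  | _ n ih =>
    cases n with
    | zero =>
      haveI : Unique (AS 0) :=
        ⟨⟨⟨[], ⟨fun h => absurd rfl h, fun i h1 h2 => by simp at h2⟩, rfl⟩⟩, as_zero_unique⟩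
      simp [Nat.card_unique, catalan_zero]
    | succ m =>
      rw [← Nat.card_eq_of_bijective _ (joinF_bij m), catalan_succ]
      haveI : ∀ i : Fin (m + 1), Fintype (AS (i : ℕ)) := fun i => Fintype.ofFinite _
      haveI : ∀ i : Fin (m + 1), Fintype (AS (m - (i : ℕ))) := fun i => Fintype.ofFinite _
      rw [Nat.card_eq_fintype_card, Fintype.card_sigma]
      refine Finset.sum_congr rfl fun i _ => ?_
      rw [Fintype.card_prod, ← Nat.card_eq_fintype_card, ← Nat.card_eq_fintype_card,
        ih i (by omega), ih (m - i) (by omega)]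

/-- The number of area sequences of size `n` equals the Catalan number
`C_n = (1/(n+1)) * binomial(2n, n)`. -/
theorem areaSeq_card_eq_catalan (n : ℕ) :
    Nat.card {w : List ℕ // IsAreaSeq w ∧ w.length = n} =
      (2 * n).choose n / (n + 1) := by
  have h := card_AS n
  rw [catalan_eq_centralBinom_div] at h
  exact h
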